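/- Let ω₁, ω₂ be states on C*-algebras A₁, A₂ respectively such that for all a_i, b_i: ω₁(a₁*b₁) and ω₂(a₂*b₂) define positive semidefinite Gram matrices. If ω₁ is even with respect to a ℤ₂-grading of A₁ (ω₁ vanishes on odd elements), then the functional ω₁⊗ω₂ on the ℤ₂-graded tensor product, defined on homogeneous simple tensors by (ω₁⊗ω₂)(a₁⊗a₂) = ω₁(a₁)ω₂(a₂), is positive: (ω₁⊗ω₂)(A*A) ≥ 0 for A = ∑_i λ_i a_{1i}⊗a_{2i} with a_{ki} homogeneous. -/

import Mathlib

open scoped ComplexOrder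

private lemma gram_hermitian {A : Type*} [Ring A] [StarRing A] [Algebra ℂ A]
    (ω : A →ₗ[ℂ] ℂ)
    (hpos : ∀ (m : ℕ) (a : Fin m → A) (μ : Fin m → ℂ),
      0 ≤ ∑ i, ∑ j, (starRingEnd ℂ) (μ i) * μ j * ω (star (a i) * a j))
    (x y : A) :
    ω (star y * x) = (starRingEnd ℂ) (ω (star x * y)) := by
  have hr : 0 ≤ ω (star x * x) := by simpa [Fin.sum_univ_one] using hpos 1 ![x] ![1]
  have hs : 0 ≤ ω (star y * y) := by simpa [Fin.sum_univ_one] using hpos 1 ![y] ![1]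
  have h1 := hpos 2 ![x, y] ![1, 1]
  have h2 := hpos 2 ![x, y] ![1, Complex.I]
  simp [Fin.sum_univ_two] at h1 h2
  set p := ω (star x * y)
  set q := ω (star y * x)
  set r := ω (star x * x)
  set s := ω (star y * y)
  rw [Complex.le_def] at hr hs h1 h2
  apply Complex.ext <;>
    simp only [Complex.add_im, Complex.add_re, Complex.mul_im, Complex.mul_re,
      Complex.I_re, Complex.I_im, Complex.conj_re, Complex.conj_im, Complex.zero_im,
      Complex.neg_re, Complex.neg_im] at * <;>
    linarith [hr.2, hs.2, h1.2, h2.2]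

private lemma gram_posSemidef {A : Type*} [Ring A] [StarRing A] [Algebra ℂ A]
    (ω : A →ₗ[ℂ] ℂ)
    (hpos : ∀ (m : ℕ) (a : Fin m → A) (μ : Fin m → ℂ),
      0 ≤ ∑ i, ∑ j, (starRingEnd ℂ) (μ i) * μ j * ω (star (a i) * a j))
    (n : ℕ) (a : Fin n → A) :
    Matrix.PosSemidef (Matrix.of fun i j => ω (star (a i) * a j)) := by
  rw [Matrix.posSemidef_iff_dotProduct_mulVec]
  constructor
  · ext i j
    simp only [Matrix.conjTranspose_apply, Matrix.of_apply]
    exact star_eq_iff_star_eq.mp (gram_hermitian ω hpos (a i) (a j)).symm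
  · intro x
    have h := hpos n a x
    calc dotProduct (star x)
          (Matrix.mulVec (Matrix.of fun i j => ω (star (a i) * a j)) x)
        = ∑ i, ∑ j, (starRingEnd ℂ) (x i) * x j * ω (star (a i) * a j) := by
          simp only [dotProduct, Matrix.mulVec, Pi.star_apply, Matrix.of_apply,
            Finset.mul_sum]
          refine Finset.sum_congr rfl fun i _ => Finset.sum_congr rfl fun j _ => ?_
          simp only [RCLike.star_def]
          ring
      _ ≥ 0 := h

theorem graded_tensor_product_state_positive
    {A₁ A₂ : Type*} [Ring A₁] [StarRing A₁] [Algebra ℂ A₁]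
    [Ring A₂] [StarRing A₂] [Algebra ℂ A₂]
    (ω₁ : A₁ →ₗ[ℂ] ℂ) (ω₂ : A₂ →ₗ[ℂ] ℂ)
    (hpos₁ : ∀ (m : ℕ) (a : Fin m → A₁) (μ : Fin m → ℂ),
      0 ≤ ∑ i, ∑ j, (starRingEnd ℂ) (μ i) * μ j * ω₁ (star (a i) * a j))
    (hpos₂ : ∀ (m : ℕ) (a : Fin m → A₂) (μ : Fin m → ℂ),
      0 ≤ ∑ i, ∑ j, (starRingEnd ℂ) (μ i) * μ j * ω₂ (star (a i) * a j))
    (n : ℕ) (a₁ : Fin n → A₁) (a₂ : Fin n → A₂)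
    (d₁ d₂ : Fin n → ZMod 2) (l : Fin n → ℂ)
    (heven : ∀ i j, d₁ i ≠ d₁ j → ω₁ (star (a₁ i) * a₁ j) = 0) :
    0 ≤ ∑ i, ∑ j,
      (starRingEnd ℂ) (l i) * l j *
        (-1 : ℂ) ^ ((d₂ i * (d₁ i + d₁ j)).val) *
        ω₁ (star (a₁ i) * a₁ j) * ω₂ (star (a₂ i) * a₂ j) := by
  -- Step 1: the sign disappears, since `ω₁` kills the terms with `d₁ i ≠ d₁ j`.
  have hstep : ∀ i j, (starRingEnd ℂ) (l i) * l j *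
        (-1 : ℂ) ^ ((d₂ i * (d₁ i + d₁ j)).val) *
        ω₁ (star (a₁ i) * a₁ j) * ω₂ (star (a₂ i) * a₂ j)
      = (starRingEnd ℂ) (l i) * l j *
        ω₁ (star (a₁ i) * a₁ j) * ω₂ (star (a₂ i) * a₂ j) := by
    intro i j
    by_cases h : d₁ i = d₁ j
    · have hz : d₁ i + d₁ j = 0 := by
        rw [h]; exact CharTwo.add_self_eq_zero _
      rw [hz, mul_zero, ZMod.val_zero, pow_zero, mul_one]
    · rw [heven i j h]; ring
  simp only [hstep]
  -- Step 2: decompose the (positive semidefinite) Gram matrix of `ω₂` as `Bᴴ * B`.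
  obtain ⟨B, hB⟩ : ∃ B : Matrix (Fin n) (Fin n) ℂ,
      (Matrix.of fun i j => ω₂ (star (a₂ i) * a₂ j)) = B.conjTranspose * B := by
    have hM := gram_posSemidef ω₂ hpos₂ n a₂
    open scoped MatrixOrder in
    obtain ⟨X, hX, -, h⟩ := CFC.exists_sqrt_of_isSelfAdjoint_of_quasispectrumRestricts
      hM.isHermitian (QuasispectrumRestricts.nnreal_of_nonneg hM.nonneg)
    exact ⟨X, by rw [← h, ← Matrix.star_eq_conjTranspose, hX.star_eq]⟩
  have hM : ∀ i j, ω₂ (star (a₂ i) * a₂ j)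
      = ∑ k, (starRingEnd ℂ) (B k i) * B k j := by
    intro i j
    have := congrFun (congrFun hB i) j
    simpa [Matrix.mul_apply, Matrix.conjTranspose_apply, RCLike.star_def] using this
  have key : (∑ i, ∑ j, (starRingEnd ℂ) (l i) * l j *
        ω₁ (star (a₁ i) * a₁ j) * ω₂ (star (a₂ i) * a₂ j))
      = ∑ k, ∑ i, ∑ j, (starRingEnd ℂ) (l i * B k i) * (l j * B k j) *
          ω₁ (star (a₁ i) * a₁ j) := by
    calc (∑ i, ∑ j, (starRingEnd ℂ) (l i) * l j *
          ω₁ (star (a₁ i) * a₁ j) * ω₂ (star (a₂ i) * a₂ j))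
        = ∑ i, ∑ j, ∑ k, (starRingEnd ℂ) (l i * B k i) * (l j * B k j) *
            ω₁ (star (a₁ i) * a₁ j) := by
          refine Finset.sum_congr rfl fun i _ => Finset.sum_congr rfl fun j _ => ?_
          rw [hM i j, Finset.mul_sum]
          refine Finset.sum_congr rfl fun k _ => ?_
          simp only [map_mul]
          ring
      _ = ∑ i, ∑ k, ∑ j, (starRingEnd ℂ) (l i * B k i) * (l j * B k j) *
            ω₁ (star (a₁ i) * a₁ j) :=
          Finset.sum_congr rfl fun i _ => Finset.sum_comm
      _ = ∑ k, ∑ i, ∑ j, (starRingEnd ℂ) (l i * B k i) * (l j * B k j) *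
            ω₁ (star (a₁ i) * a₁ j) := Finset.sum_comm
  rw [key]
  exact Finset.sum_nonneg fun k _ => hpos₁ n a₁ fun i => l i * B k i
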